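/- Let (H,B₁,B₂) be a Rota-Baxter system of Hopf algebras with descendent operation a∘b = B₁(a₁)bS(B₂(a₂)) and cocycle σ(a)=B₁(a₁)S(B₂(a₂)). Then the Hopf truss compatibility holds: a∘(bc) = (a₁∘b)S(σ(a₂))(a₃∘c) for all a,b,c∈H. In particular (H,·,∘) is a Hopf truss with cocycle σ. -/

import Mathlib

open TensorProduct Coalgebra HopfAlgebra LinearMap

variable {F : Type*} [Field F] {H : Type*} [Ring H] [HopfAlgebra F H]

/-- The descendent operation `a ⊗ b ↦ B₁(a₁) b S(B₂(a₂))` as a linear map on `H ⊗ H`. -/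
noncomputable def circL (B₁ B₂ : H →ₗ[F] H) : H ⊗[F] H →ₗ[F] H :=
  (LinearMap.mul' F H)
    ∘ₗ (TensorProduct.map ((LinearMap.mul' F H) ∘ₗ TensorProduct.map B₁ LinearMap.id)
        ((antipode (R := F)) ∘ₗ B₂))
    ∘ₗ (TensorProduct.assoc F H H H).symm.toLinearMap
    ∘ₗ (TensorProduct.map LinearMap.id (TensorProduct.comm F H H).toLinearMap)
    ∘ₗ (TensorProduct.assoc F H H H).toLinearMap
    ∘ₗ (TensorProduct.map Coalgebra.comul LinearMap.id)

/-- The descendent operation `a ∘ b = B₁(a₁) b S(B₂(a₂))`. -/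
noncomputable def circ (B₁ B₂ : H →ₗ[F] H) (a b : H) : H := circL B₁ B₂ (a ⊗ₜ[F] b)

/-- The cocycle `σ = B₁ ∗ (S ∘ B₂)`, i.e. `σ(a) = B₁(a₁) S(B₂(a₂))`. -/
noncomputable def cocycleL (B₁ B₂ : H →ₗ[F] H) : H →ₗ[F] H :=
  (LinearMap.mul' F H) ∘ₗ (TensorProduct.map B₁ ((antipode (R := F)) ∘ₗ B₂)) ∘ₗ Coalgebra.comul

/-- `(H, B₁, B₂)` is a Rota-Baxter system of Hopf algebras: `B₁, B₂` are coalgebra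
homomorphisms sending `1` to `1` such that `Bᵢ(a)Bᵢ(b) = Bᵢ(B₁(a₁) b S(B₂(a₂)))`. -/
noncomputable def IsRBSystem (B₁ B₂ : H →ₗ[F] H) : Prop :=
  (Coalgebra.comul ∘ₗ B₁ = TensorProduct.map B₁ B₁ ∘ₗ Coalgebra.comul) ∧
  (Coalgebra.counit ∘ₗ B₁ = Coalgebra.counit (R := F)) ∧
  (Coalgebra.comul ∘ₗ B₂ = TensorProduct.map B₂ B₂ ∘ₗ Coalgebra.comul) ∧
  (Coalgebra.counit ∘ₗ B₂ = Coalgebra.counit (R := F)) ∧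
  B₁ 1 = 1 ∧ B₂ 1 = 1 ∧
  (∀ a b : H, B₁ a * B₁ b = B₁ (circ B₁ B₂ a b)) ∧
  (∀ a b : H, B₂ a * B₂ b = B₂ (circ B₁ B₂ a b))

namespace RBAux



variable {F : Type*} [Field F] {H : Type*} [Ring H] [HopfAlgebra F H]

variable (F H) in
/-- convolution unit on a coalgebra `C` with target `H` -/
noncomputable def cunit (C : Type*) [AddCommMonoid C] [Module F C] [CoalgebraStruct F C] :
    C →ₗ[F] H := Algebra.linearMap F H ∘ₗ Coalgebra.counit

variable {C : Type*} [AddCommMonoid C] [Module F C] [Coalgebra F C]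

/-- convolution product -/
noncomputable def conv (f g : C →ₗ[F] H) : C →ₗ[F] H :=
  (LinearMap.mul' F H) ∘ₗ (TensorProduct.map f g) ∘ₗ Coalgebra.comul

lemma conv_repr (f g : C →ₗ[F] H) {a : C} (r : Coalgebra.Repr F a (C × C)) :
    conv f g a = ∑ i ∈ r.index, f (r.left i) * g (r.right i) := by
  simp only [conv, LinearMap.comp_apply, ← r.eq, map_sum, TensorProduct.map_tmul,
    LinearMap.mul'_apply]

lemma conv_assoc (f g h : C →ₗ[F] H) : conv f (conv g h) = conv (conv f g) h := by
  ext a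
  set r := ℛ F a with hr
  set r1 : ∀ i, Coalgebra.Repr F (r.left i) (C × C) := fun i => ℛ F (r.left i) with hr1
  set r2 : ∀ i, Coalgebra.Repr F (r.right i) (C × C) := fun i => ℛ F (r.right i) with hr2
  have key := congrArg ((LinearMap.mul' F H) ∘ₗ
    (TensorProduct.map f ((LinearMap.mul' F H) ∘ₗ TensorProduct.map g h)))
    (Coalgebra.sum_tmul_tmul_eq r r1 r2)
  simp only [map_sum, LinearMap.comp_apply, TensorProduct.map_tmul,
    LinearMap.mul'_apply] at key
  calc conv f (conv g h) a
      = ∑ i ∈ r.index, f (r.left i) * conv g h (r.right i) := conv_repr _ _ r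
    _ = ∑ i ∈ r.index, ∑ j ∈ (r2 i).index,
          f (r.left i) * (g ((r2 i).left j) * h ((r2 i).right j)) := by
        refine Finset.sum_congr rfl fun i _ => ?_
        rw [conv_repr _ _ (r2 i), Finset.mul_sum]
    _ = ∑ i ∈ r.index, ∑ j ∈ (r1 i).index,
          f ((r1 i).left j) * (g ((r1 i).right j) * h (r.right i)) := key.symm
    _ = ∑ i ∈ r.index, (∑ j ∈ (r1 i).index,
          f ((r1 i).left j) * g ((r1 i).right j)) * h (r.right i) := by
        refine Finset.sum_congr rfl fun i _ => ?_
        rw [Finset.sum_mul]; exact Finset.sum_congr rfl fun j _ => (mul_assoc _ _ _).symm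
    _ = ∑ i ∈ r.index, conv f g (r.left i) * h (r.right i) := by
        refine Finset.sum_congr rfl fun i _ => ?_
        rw [conv_repr _ _ (r1 i)]
    _ = conv (conv f g) h a := (conv_repr _ _ r).symm

lemma conv_unit_right (f : C →ₗ[F] H) : conv f (cunit F H C) = f := by
  ext a
  set r := ℛ F a with hr
  have key := congrArg (f ∘ₗ (TensorProduct.rid F C).toLinearMap)
    (Coalgebra.sum_tmul_counit_eq r)
  simp only [map_sum, LinearMap.comp_apply, LinearEquiv.coe_coe, TensorProduct.rid_tmul,
    map_smul, one_smul] at key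
  rw [conv_repr _ _ r]
  calc ∑ i ∈ r.index, f (r.left i) * cunit F H C (r.right i)
      = ∑ i ∈ r.index, Coalgebra.counit (R := F) (r.right i) • f (r.left i) := by
        refine Finset.sum_congr rfl fun i _ => ?_
        simp [cunit, Algebra.smul_def, Algebra.commutes]
    _ = f a := key

lemma conv_unit_left (f : C →ₗ[F] H) : conv (cunit F H C) f = f := by
  ext a
  set r := ℛ F a with hr
  have key := congrArg (f ∘ₗ (TensorProduct.lid F C).toLinearMap)
    (Coalgebra.sum_counit_tmul_eq r)
  simp only [map_sum, LinearMap.comp_apply, LinearEquiv.coe_coe, TensorProduct.lid_tmul,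
    map_smul, one_smul] at key
  rw [conv_repr _ _ r]
  calc ∑ i ∈ r.index, cunit F H C (r.left i) * f (r.right i)
      = ∑ i ∈ r.index, Coalgebra.counit (R := F) (r.left i) • f (r.right i) := by
        refine Finset.sum_congr rfl fun i _ => ?_
        simp [cunit, Algebra.smul_def]
    _ = f a := key

/-- coalgebra morphisms are conv-invertible with inverse `S ∘ T` -/
lemma conv_cancel_right (T : H →ₗ[F] H)
    (hΔ : Coalgebra.comul ∘ₗ T = TensorProduct.map T T ∘ₗ Coalgebra.comul)
    (hε : Coalgebra.counit ∘ₗ T = Coalgebra.counit (R := F)) :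
    conv T ((antipode (R := F)) ∘ₗ T) = (cunit F H H) := by
  ext a
  have h1 : TensorProduct.map T ((antipode (R := F)) ∘ₗ T)
      = (LinearMap.lTensor H (antipode (R := F))) ∘ₗ TensorProduct.map T T := by
    rw [show (T : H →ₗ[F] H) = LinearMap.id ∘ₗ T from rfl, TensorProduct.map_comp]
    rfl
  have h2 := congrFun (congrArg DFunLike.coe hΔ) a
  have h3 := congrFun (congrArg DFunLike.coe hε) a
  simp only [conv, LinearMap.comp_apply] at *
  rw [h1, LinearMap.comp_apply, ← h2, mul_antipode_lTensor_comul_apply, h3]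
  rfl

lemma conv_cancel_left (T : H →ₗ[F] H)
    (hΔ : Coalgebra.comul ∘ₗ T = TensorProduct.map T T ∘ₗ Coalgebra.comul)
    (hε : Coalgebra.counit ∘ₗ T = Coalgebra.counit (R := F)) :
    conv ((antipode (R := F)) ∘ₗ T) T = (cunit F H H) := by
  ext a
  have h1 : TensorProduct.map ((antipode (R := F)) ∘ₗ T) T
      = (LinearMap.rTensor H (antipode (R := F))) ∘ₗ TensorProduct.map T T := by
    rw [show (T : H →ₗ[F] H) = LinearMap.id ∘ₗ T from rfl, TensorProduct.map_comp]
    rfl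
  have h2 := congrFun (congrArg DFunLike.coe hΔ) a
  have h3 := congrFun (congrArg DFunLike.coe hε) a
  simp only [conv, LinearMap.comp_apply] at *
  rw [h1, LinearMap.comp_apply, ← h2, mul_antipode_rTensor_comul_apply, h3]
  rfl

lemma conv_S_id : conv (antipode (R := F) (A := H)) LinearMap.id = cunit F H H := by
  have := conv_cancel_left (F := F) (H := H) LinearMap.id ?_ ?_
  · simpa using this
  · simp [TensorProduct.map_id]
  · simp

lemma mul'_mulLeft (b : H) :
    (LinearMap.mul' F H) ∘ₗ TensorProduct.map (LinearMap.mulLeft F b) LinearMap.id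
      = LinearMap.mulLeft F b ∘ₗ LinearMap.mul' F H := by
  apply TensorProduct.ext'
  intro x y
  simp [mul_assoc]

lemma conv_mulLeft {C : Type*} [AddCommMonoid C] [Module F C] [Coalgebra F C]
    (b : H) (f g : C →ₗ[F] H) :
    conv (LinearMap.mulLeft F b ∘ₗ f) g = LinearMap.mulLeft F b ∘ₗ conv f g := by
  unfold conv
  rw [show TensorProduct.map (LinearMap.mulLeft F b ∘ₗ f) g
      = TensorProduct.map (LinearMap.mulLeft F b) LinearMap.id ∘ₗ TensorProduct.map f g by
    rw [← TensorProduct.map_comp]; rfl]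
  rw [← LinearMap.comp_assoc, ← LinearMap.comp_assoc, mul'_mulLeft]
  rfl

variable {F : Type*} [Field F] {H : Type*} [Ring H] [HopfAlgebra F H]

lemma comul2_tmul (x y : H) (rx : Coalgebra.Repr F x (H × H)) (ry : Coalgebra.Repr F y (H × H)) :
    Coalgebra.comul (R := F) (x ⊗ₜ[F] y) = ∑ i ∈ rx.index, ∑ j ∈ ry.index,
      (rx.left i ⊗ₜ[F] ry.left j) ⊗ₜ[F] (rx.right i ⊗ₜ[F] ry.right j) := by
  have h : Coalgebra.comul (R := F) (x ⊗ₜ[F] y) =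
      (TensorProduct.tensorTensorTensorComm F H H H H)
        (Coalgebra.comul (R := F) x ⊗ₜ[F] Coalgebra.comul (R := F) y) := rfl
  rw [h, ← rx.eq, ← ry.eq]
  rw [TensorProduct.sum_tmul, map_sum]
  refine Finset.sum_congr rfl fun i _ => ?_
  rw [TensorProduct.tmul_sum, map_sum]
  exact Finset.sum_congr rfl fun j _ => rfl

lemma counit2_tmul (x y : H) :
    Coalgebra.counit (R := F) (x ⊗ₜ[F] y)
      = Coalgebra.counit (R := F) x * Coalgebra.counit (R := F) y := by
  rw [show Coalgebra.counit (R := F) (x ⊗ₜ[F] y)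
    = Coalgebra.counit (R := F) y • Coalgebra.counit (R := F) x from rfl, smul_eq_mul, mul_comm]

set_option synthInstance.maxHeartbeats 1000000 in
set_option maxHeartbeats 1000000 in
noncomputable instance instCoalgHH : Coalgebra F (H ⊗[F] H) :=
  { (inferInstance : CoalgebraStruct F (H ⊗[F] H)) with
    rTensor_counit_comp_comul := by
      apply TensorProduct.ext'
      intro x y
      set rx := ℛ F x with hrx
      set ry := ℛ F y with hry
      have keyx := Coalgebra.sum_counit_tmul_eq rx
      have keyy := Coalgebra.sum_counit_tmul_eq ry
      set Θ : (F ⊗[F] H) ⊗[F] (F ⊗[F] H) →ₗ[F] F ⊗[F] (H ⊗[F] H) :=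
        (TensorProduct.map (LinearMap.mul' F F) LinearMap.id) ∘ₗ
          (TensorProduct.tensorTensorTensorComm F F H F H).toLinearMap with hΘ
      have key := congrArg₂ (fun s t => Θ (s ⊗ₜ[F] t)) keyx keyy
      rw [TensorProduct.sum_tmul, map_sum] at key
      simp only [TensorProduct.tmul_sum, map_sum] at key
      simp only [hΘ, LinearMap.comp_apply, LinearEquiv.coe_coe,
        TensorProduct.tensorTensorTensorComm_tmul, TensorProduct.map_tmul,
        LinearMap.mul'_apply, LinearMap.id_coe, id_eq, mul_one] at key
      simp only [LinearMap.comp_apply]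
      rw [comul2_tmul x y rx ry]
      simp only [map_sum, LinearMap.rTensor_tmul, counit2_tmul]
      rw [TensorProduct.mk_apply]
      exact key
    lTensor_counit_comp_comul := by
      apply TensorProduct.ext'
      intro x y
      set rx := ℛ F x with hrx
      set ry := ℛ F y with hry
      have keyx := Coalgebra.sum_tmul_counit_eq rx
      have keyy := Coalgebra.sum_tmul_counit_eq ry
      set Θ : (H ⊗[F] F) ⊗[F] (H ⊗[F] F) →ₗ[F] (H ⊗[F] H) ⊗[F] F :=
        (TensorProduct.map LinearMap.id (LinearMap.mul' F F)) ∘ₗ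
          (TensorProduct.tensorTensorTensorComm F H F H F).toLinearMap with hΘ
      have key := congrArg₂ (fun s t => Θ (s ⊗ₜ[F] t)) keyx keyy
      rw [TensorProduct.sum_tmul, map_sum] at key
      simp only [TensorProduct.tmul_sum, map_sum] at key
      simp only [hΘ, LinearMap.comp_apply, LinearEquiv.coe_coe,
        TensorProduct.tensorTensorTensorComm_tmul, TensorProduct.map_tmul,
        LinearMap.mul'_apply, LinearMap.id_coe, id_eq, mul_one] at key
      simp only [LinearMap.comp_apply]
      rw [comul2_tmul x y rx ry]
      simp only [map_sum, LinearMap.lTensor_tmul, counit2_tmul]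
      rw [LinearMap.flip_apply, TensorProduct.mk_apply]
      exact key
    coassoc := by
      apply TensorProduct.ext'
      intro x y
      set rx := ℛ F x with hrx
      set ry := ℛ F y with hry
      set r1x : ∀ i, Coalgebra.Repr F (rx.left i) (H × H) := fun i => ℛ F (rx.left i) with hr1x
      set r2x : ∀ i, Coalgebra.Repr F (rx.right i) (H × H) := fun i => ℛ F (rx.right i) with hr2x
      set r1y : ∀ j, Coalgebra.Repr F (ry.left j) (H × H) := fun j => ℛ F (ry.left j) with hr1y
      set r2y : ∀ j, Coalgebra.Repr F (ry.right j) (H × H) := fun j => ℛ F (ry.right j) with hr2y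
      have keyx := Coalgebra.sum_tmul_tmul_eq rx r1x r2x
      have keyy := Coalgebra.sum_tmul_tmul_eq ry r1y r2y
      set Θ : (H ⊗[F] (H ⊗[F] H)) ⊗[F] (H ⊗[F] (H ⊗[F] H)) →ₗ[F]
          (H ⊗[F] H) ⊗[F] ((H ⊗[F] H) ⊗[F] (H ⊗[F] H)) :=
        (TensorProduct.map LinearMap.id
            (TensorProduct.tensorTensorTensorComm F H H H H).toLinearMap) ∘ₗ
          (TensorProduct.tensorTensorTensorComm F H (H ⊗[F] H) H (H ⊗[F] H)).toLinearMap
        with hΘ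
      have key := congrArg₂ (fun s t => Θ (s ⊗ₜ[F] t)) keyx keyy
      rw [TensorProduct.sum_tmul, map_sum] at key
      simp only [TensorProduct.sum_tmul, map_sum] at key
      simp only [TensorProduct.tmul_sum, map_sum] at key
      simp only [hΘ, LinearMap.comp_apply, LinearEquiv.coe_coe,
        TensorProduct.tensorTensorTensorComm_tmul, TensorProduct.map_tmul,
        LinearMap.id_coe, id_eq] at key
      simp only [LinearMap.comp_apply]
      rw [comul2_tmul x y rx ry]
      simp only [map_sum, LinearMap.rTensor_tmul, LinearMap.lTensor_tmul]
      calc (∑ i ∈ rx.index, ∑ j ∈ ry.index,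
              (TensorProduct.assoc F (H ⊗[F] H) (H ⊗[F] H) (H ⊗[F] H))
                ((Coalgebra.comul (R := F) (rx.left i ⊗ₜ[F] ry.left j))
                  ⊗ₜ[F] (rx.right i ⊗ₜ[F] ry.right j)))
          = ∑ i ∈ rx.index, ∑ j ∈ ry.index, ∑ k ∈ (r1x i).index, ∑ l ∈ (r1y j).index,
              ((r1x i).left k ⊗ₜ[F] (r1y j).left l) ⊗ₜ[F]
                (((r1x i).right k ⊗ₜ[F] (r1y j).right l) ⊗ₜ[F]
                  (rx.right i ⊗ₜ[F] ry.right j)) := by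
            refine Finset.sum_congr rfl fun i _ => Finset.sum_congr rfl fun j _ => ?_
            rw [comul2_tmul _ _ (r1x i) (r1y j)]
            rw [TensorProduct.sum_tmul, map_sum]
            refine Finset.sum_congr rfl fun k _ => ?_
            rw [TensorProduct.sum_tmul, map_sum]
            exact Finset.sum_congr rfl fun l _ => rfl
        _ = ∑ i ∈ rx.index, ∑ k ∈ (r1x i).index, ∑ j ∈ ry.index, ∑ l ∈ (r1y j).index,
              ((r1x i).left k ⊗ₜ[F] (r1y j).left l) ⊗ₜ[F]
                (((r1x i).right k ⊗ₜ[F] (r1y j).right l) ⊗ₜ[F]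
                  (rx.right i ⊗ₜ[F] ry.right j)) := by
            exact Finset.sum_congr rfl fun i _ => Finset.sum_comm
        _ = ∑ i ∈ rx.index, ∑ k ∈ (r2x i).index, ∑ j ∈ ry.index, ∑ l ∈ (r2y j).index,
              (rx.left i ⊗ₜ[F] ry.left j) ⊗ₜ[F]
                (((r2x i).left k ⊗ₜ[F] (r2y j).left l) ⊗ₜ[F]
                  ((r2x i).right k ⊗ₜ[F] (r2y j).right l)) := key
        _ = ∑ i ∈ rx.index, ∑ j ∈ ry.index, ∑ k ∈ (r2x i).index, ∑ l ∈ (r2y j).index,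
              (rx.left i ⊗ₜ[F] ry.left j) ⊗ₜ[F]
                (((r2x i).left k ⊗ₜ[F] (r2y j).left l) ⊗ₜ[F]
                  ((r2x i).right k ⊗ₜ[F] (r2y j).right l)) := by
            exact Finset.sum_congr rfl fun i _ => Finset.sum_comm
        _ = ∑ i ∈ rx.index, ∑ j ∈ ry.index,
              (rx.left i ⊗ₜ[F] ry.left j) ⊗ₜ[F]
                (Coalgebra.comul (R := F) (rx.right i ⊗ₜ[F] ry.right j)) := by
            refine Finset.sum_congr rfl fun i _ => Finset.sum_congr rfl fun j _ => ?_
            rw [comul2_tmul _ _ (r2x i) (r2y j)]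
            rw [TensorProduct.tmul_sum]
            refine Finset.sum_congr rfl fun k _ => ?_
            rw [TensorProduct.tmul_sum] }

-- Stage 4: antipode properties
variable {F : Type*} [Field F] {H : Type*} [Ring H] [HopfAlgebra F H]

lemma antipode_one : antipode (R := F) (1 : H) = 1 := by
  have h := mul_antipode_rTensor_comul_apply (R := F) (A := H) 1
  rw [Bialgebra.comul_one, Algebra.TensorProduct.one_def] at h
  simpa using h

lemma antipode_algebraMap (r : F) :
    antipode (R := F) (algebraMap F H r) = algebraMap F H r := by
  rw [Algebra.algebraMap_eq_smul_one, map_smul, antipode_one]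

lemma mulmul (s t : H ⊗[F] H) :
    TensorProduct.map (LinearMap.mul' F H) (LinearMap.mul' F H)
      ((TensorProduct.tensorTensorTensorComm F H H H H) (s ⊗ₜ[F] t)) = s * t := by
  induction s using TensorProduct.induction_on with
  | zero => simp
  | tmul a b =>
    induction t using TensorProduct.induction_on with
    | zero => simp
    | tmul c d => simp [Algebra.TensorProduct.tmul_mul_tmul]
    | add u v hu hv => simp only [TensorProduct.tmul_add, map_add, hu, hv, mul_add]
  | add u v hu hv => simp only [TensorProduct.add_tmul, map_add, hu, hv, add_mul]

/-- `S ∘ μ` is a left convolution inverse of `μ`. -/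
lemma conv_Smul_mul :
    conv ((antipode (R := F)) ∘ₗ LinearMap.mul' F H) (LinearMap.mul' F H)
      = cunit F H (H ⊗[F] H) := by
  apply TensorProduct.ext'
  intro x y
  have hA : TensorProduct.map (LinearMap.mul' F H) (LinearMap.mul' F H)
      (Coalgebra.comul (R := F) (x ⊗ₜ[F] y)) = Coalgebra.comul (R := F) (x * y) := by
    have h : Coalgebra.comul (R := F) (x ⊗ₜ[F] y) =
        (TensorProduct.tensorTensorTensorComm F H H H H)
          (Coalgebra.comul (R := F) x ⊗ₜ[F] Coalgebra.comul (R := F) y) := rfl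
    rw [h, mulmul, Bialgebra.comul_mul]
  have h1 : TensorProduct.map ((antipode (R := F)) ∘ₗ LinearMap.mul' F H) (LinearMap.mul' F H)
      = (LinearMap.rTensor H (antipode (R := F))) ∘ₗ
        TensorProduct.map (LinearMap.mul' F H) (LinearMap.mul' F H) := by
    rw [show (LinearMap.mul' F H : H ⊗[F] H →ₗ[F] H)
        = LinearMap.id ∘ₗ LinearMap.mul' F H from rfl, TensorProduct.map_comp]
    rfl
  simp only [conv, cunit, LinearMap.comp_apply, h1, hA, mul_antipode_rTensor_comul_apply]
  rw [counit2_tmul, Bialgebra.counit_mul, Algebra.linearMap_apply]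

/-- `(x,y) ↦ S(y)S(x)` is a right convolution inverse of `μ`. -/
lemma conv_mul_Sop :
    conv (LinearMap.mul' F H)
      ((LinearMap.mul' F H) ∘ₗ
        TensorProduct.map (antipode (R := F)) (antipode (R := F)) ∘ₗ
        (TensorProduct.comm F H H).toLinearMap)
      = cunit F H (H ⊗[F] H) := by
  apply TensorProduct.ext'
  intro x y
  set rx := ℛ F x with hrx
  set ry := ℛ F y with hry
  have h : conv (LinearMap.mul' F H)
      ((LinearMap.mul' F H) ∘ₗ
        TensorProduct.map (antipode (R := F)) (antipode (R := F)) ∘ₗ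
        (TensorProduct.comm F H H).toLinearMap) (x ⊗ₜ[F] y)
      = ∑ i ∈ rx.index, ∑ j ∈ ry.index,
          (rx.left i * ry.left j) *
            (antipode (R := F) (ry.right j) * antipode (R := F) (rx.right i)) := by
    simp only [conv, LinearMap.comp_apply, comul2_tmul x y rx ry, map_sum,
      TensorProduct.map_tmul, LinearMap.mul'_apply, LinearEquiv.coe_coe,
      TensorProduct.comm_tmul]
  rw [h]
  have h2 : ∀ i ∈ rx.index, ∑ j ∈ ry.index,
      (rx.left i * ry.left j) *
        (antipode (R := F) (ry.right j) * antipode (R := F) (rx.right i))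
      = Coalgebra.counit (R := F) y • (rx.left i * antipode (R := F) (rx.right i)) := by
    intro i _
    calc ∑ j ∈ ry.index, (rx.left i * ry.left j) *
            (antipode (R := F) (ry.right j) * antipode (R := F) (rx.right i))
        = rx.left i * ((∑ j ∈ ry.index, ry.left j * antipode (R := F) (ry.right j)) *
            antipode (R := F) (rx.right i)) := by
          rw [Finset.sum_mul, Finset.mul_sum]
          exact Finset.sum_congr rfl fun j _ => by simp [mul_assoc]
      _ = Coalgebra.counit (R := F) y • (rx.left i * antipode (R := F) (rx.right i)) := by
          rw [sum_mul_antipode_eq_smul ry, smul_mul_assoc, one_mul, mul_smul_comm]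
  rw [Finset.sum_congr rfl h2, ← Finset.smul_sum, sum_mul_antipode_eq_smul rx,
    smul_smul, cunit, LinearMap.comp_apply, counit2_tmul,
    Algebra.linearMap_apply, Algebra.algebraMap_eq_smul_one, mul_comm]

lemma antipode_mul (x y : H) :
    antipode (R := F) (x * y) = antipode (R := F) y * antipode (R := F) x := by
  have e : ((antipode (R := F)) ∘ₗ LinearMap.mul' F H : H ⊗[F] H →ₗ[F] H)
      = (LinearMap.mul' F H) ∘ₗ
          TensorProduct.map (antipode (R := F)) (antipode (R := F)) ∘ₗ
          (TensorProduct.comm F H H).toLinearMap := by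
    rw [← conv_unit_right ((antipode (R := F)) ∘ₗ LinearMap.mul' F H), ← conv_mul_Sop,
      conv_assoc, conv_Smul_mul, conv_unit_left]
  have := congrFun (congrArg DFunLike.coe e) (x ⊗ₜ[F] y)
  simpa using this

/-- swapped representation, using cocommutativity -/
noncomputable def rswap (hcc : ∀ a : H, (TensorProduct.comm F H H) (Coalgebra.comul a)
    = Coalgebra.comul a) {a : H} (r : Coalgebra.Repr F a (H × H)) : Coalgebra.Repr F a (H × H) :=
  ⟨r.index, r.right, r.left, by
    have h := congrArg (TensorProduct.comm F H H) r.eq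
    simp only [map_sum, TensorProduct.comm_tmul] at h
    exact h.trans (hcc a)⟩

lemma antipode_antipode
    (hcc : ∀ a : H, (TensorProduct.comm F H H) (Coalgebra.comul a) = Coalgebra.comul a)
    (a : H) : antipode (R := F) (antipode (R := F) a) = a := by
  have hconv : conv ((antipode (R := F)) ∘ₗ (antipode (R := F) (A := H))) (antipode (R := F))
      = cunit F H H := by
    ext a
    set r := ℛ F a with hr
    rw [conv_repr _ _ r]
    calc ∑ i ∈ r.index,
          ((antipode (R := F)) ∘ₗ (antipode (R := F))) (r.left i) * antipode (R := F) (r.right i)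
        = ∑ i ∈ r.index, antipode (R := F) (r.right i * antipode (R := F) (r.left i)) := by
          exact Finset.sum_congr rfl fun i _ => (antipode_mul _ _).symm
      _ = antipode (R := F) (∑ i ∈ r.index, r.right i * antipode (R := F) (r.left i)) := by
          rw [map_sum]
      _ = antipode (R := F) (Coalgebra.counit (R := F) a • (1 : H)) := by
          exact congrArg _ (sum_mul_antipode_eq_smul (rswap hcc r))
      _ = cunit F H H a := by
          rw [map_smul, antipode_one, cunit, LinearMap.comp_apply,
            Algebra.linearMap_apply, Algebra.algebraMap_eq_smul_one]
  have e : ((antipode (R := F)) ∘ₗ (antipode (R := F) (A := H)) : H →ₗ[F] H)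
      = LinearMap.id := by
    rw [← conv_unit_right ((antipode (R := F)) ∘ₗ (antipode (R := F) (A := H))), ← conv_S_id,
      conv_assoc, hconv, conv_unit_left]
  exact congrFun (congrArg DFunLike.coe e) a

/-- `S ∘ σ = B₂ ⋆ (S ∘ B₁)` -/
lemma sigma_S
    (hcc : ∀ a : H, (TensorProduct.comm F H H) (Coalgebra.comul a) = Coalgebra.comul a)
    (B₁ B₂ : H →ₗ[F] H) :
    (antipode (R := F)) ∘ₗ conv B₁ ((antipode (R := F)) ∘ₗ B₂)
      = conv B₂ ((antipode (R := F)) ∘ₗ B₁) := by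
  ext a
  set r := ℛ F a with hr
  rw [LinearMap.comp_apply, conv_repr _ _ r, conv_repr _ _ (rswap hcc r)]
  calc antipode (R := F) (∑ i ∈ r.index,
          B₁ (r.left i) * ((antipode (R := F)) ∘ₗ B₂) (r.right i))
      = ∑ i ∈ r.index, antipode (R := F)
          (B₁ (r.left i) * antipode (R := F) (B₂ (r.right i))) := by rw [map_sum]; rfl
    _ = ∑ i ∈ r.index, B₂ (r.right i) * antipode (R := F) (B₁ (r.left i)) := by
        refine Finset.sum_congr rfl fun i _ => ?_
        rw [antipode_mul, antipode_antipode hcc]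
    _ = ∑ i ∈ r.index,
          B₂ ((rswap hcc r).left i) * ((antipode (R := F)) ∘ₗ B₁) ((rswap hcc r).right i) := rfl


lemma circL_tmul (B₁ B₂ : H →ₗ[F] H) (a b : H) (r : Coalgebra.Repr F a (H × H)) :
    circL B₁ B₂ (a ⊗ₜ[F] b) = ∑ i ∈ r.index,
      B₁ (r.left i) * b * antipode (R := F) (B₂ (r.right i)) := by
  unfold circL
  simp only [LinearMap.comp_apply, TensorProduct.map_tmul, LinearMap.id_coe, id_eq]
  rw [← r.eq, TensorProduct.sum_tmul]
  simp only [map_sum, LinearEquiv.coe_coe, TensorProduct.assoc_tmul,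
    TensorProduct.map_tmul, LinearMap.id_coe, id_eq, TensorProduct.comm_tmul,
    TensorProduct.assoc_symm_tmul, LinearMap.comp_apply, LinearMap.mul'_apply]

lemma phi_eq (B₁ B₂ : H →ₗ[F] H) (b : H) :
    circL B₁ B₂ ∘ₗ (TensorProduct.mk F H H).flip b
      = conv B₁ (LinearMap.mulLeft F b ∘ₗ ((antipode (R := F)) ∘ₗ B₂)) := by
  ext a
  set r := ℛ F a with hr
  rw [LinearMap.comp_apply, LinearMap.flip_apply, TensorProduct.mk_apply,
    circL_tmul B₁ B₂ a b r, conv_repr _ _ r]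
  refine Finset.sum_congr rfl fun i _ => ?_
  simp only [LinearMap.comp_apply, LinearMap.mulLeft_apply]
  rw [mul_assoc]

end RBAux

/-- A Rota-Baxter system of Hopf algebras satisfies the Hopf truss compatibility:
`a ∘ (bc) = (a₁ ∘ b) S(σ(a₂)) (a₃ ∘ c)`; hence `(H, ·, ∘)` is a Hopf truss with
cocycle `σ`. -/
theorem rbSystem_hopfTruss
    (hcc : ∀ a : H, (TensorProduct.comm F H H) (Coalgebra.comul a) = Coalgebra.comul a)
    (B₁ B₂ : H →ₗ[F] H) (hRB : IsRBSystem B₁ B₂) :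
    ∀ a b c : H, circ B₁ B₂ a (b * c) =
      LinearMap.mul' F H (TensorProduct.map
        (circL B₁ B₂ ∘ₗ (TensorProduct.mk F H H).flip b)
        ((LinearMap.mul' F H) ∘ₗ TensorProduct.map
          ((antipode (R := F)) ∘ₗ cocycleL B₁ B₂)
          (circL B₁ B₂ ∘ₗ (TensorProduct.mk F H H).flip c))
        (TensorProduct.map LinearMap.id Coalgebra.comul (Coalgebra.comul a))) := by
  obtain ⟨hΔ1, hε1, hΔ2, hε2, -, -, -, -⟩ := hRB
  intro a b c
  have c1 := RBAux.conv_cancel_left B₁ hΔ1 hε1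
  have c2 := RBAux.conv_cancel_left B₂ hΔ2 hε2
  have hg : ((antipode (R := F)) ∘ₗ cocycleL B₁ B₂ : H →ₗ[F] H)
      = RBAux.conv B₂ ((antipode (R := F)) ∘ₗ B₁) := by
    have hcoc : cocycleL B₁ B₂ = RBAux.conv B₁ ((antipode (R := F)) ∘ₗ B₂) := rfl
    rw [hcoc, RBAux.sigma_S hcc B₁ B₂]
  have main : circL B₁ B₂ ∘ₗ (TensorProduct.mk F H H).flip (b * c)
      = RBAux.conv (circL B₁ B₂ ∘ₗ (TensorProduct.mk F H H).flip b)
          (RBAux.conv ((antipode (R := F)) ∘ₗ cocycleL B₁ B₂)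
            (circL B₁ B₂ ∘ₗ (TensorProduct.mk F H H).flip c)) := by
    rw [RBAux.phi_eq B₁ B₂ b, RBAux.phi_eq B₁ B₂ c, RBAux.phi_eq B₁ B₂ (b * c), hg]
    rw [RBAux.conv_assoc (RBAux.conv B₂ ((antipode (R := F)) ∘ₗ B₁)) B₁
      (LinearMap.mulLeft F c ∘ₗ ((antipode (R := F)) ∘ₗ B₂))]
    rw [← RBAux.conv_assoc B₂ ((antipode (R := F)) ∘ₗ B₁) B₁, c1, RBAux.conv_unit_right]
    rw [← RBAux.conv_assoc B₁
      (LinearMap.mulLeft F b ∘ₗ ((antipode (R := F)) ∘ₗ B₂))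
      (RBAux.conv B₂ (LinearMap.mulLeft F c ∘ₗ ((antipode (R := F)) ∘ₗ B₂)))]
    rw [RBAux.conv_mulLeft b ((antipode (R := F)) ∘ₗ B₂)
      (RBAux.conv B₂ (LinearMap.mulLeft F c ∘ₗ ((antipode (R := F)) ∘ₗ B₂)))]
    rw [RBAux.conv_assoc ((antipode (R := F)) ∘ₗ B₂) B₂
      (LinearMap.mulLeft F c ∘ₗ ((antipode (R := F)) ∘ₗ B₂)), c2, RBAux.conv_unit_left]
    simp only [← LinearMap.comp_assoc]
    rw [← LinearMap.mulLeft_mul]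
  have hmap : TensorProduct.map (circL B₁ B₂ ∘ₗ (TensorProduct.mk F H H).flip b)
        (RBAux.conv ((antipode (R := F)) ∘ₗ cocycleL B₁ B₂)
          (circL B₁ B₂ ∘ₗ (TensorProduct.mk F H H).flip c))
      = (TensorProduct.map (circL B₁ B₂ ∘ₗ (TensorProduct.mk F H H).flip b)
          ((LinearMap.mul' F H) ∘ₗ TensorProduct.map
            ((antipode (R := F)) ∘ₗ cocycleL B₁ B₂)
            (circL B₁ B₂ ∘ₗ (TensorProduct.mk F H H).flip c))) ∘ₗ
          (TensorProduct.map LinearMap.id Coalgebra.comul) := by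
    rw [← TensorProduct.map_comp, LinearMap.comp_id]
    rfl
  calc circ B₁ B₂ a (b * c)
      = (circL B₁ B₂ ∘ₗ (TensorProduct.mk F H H).flip (b * c)) a := rfl
    _ = RBAux.conv (circL B₁ B₂ ∘ₗ (TensorProduct.mk F H H).flip b)
          (RBAux.conv ((antipode (R := F)) ∘ₗ cocycleL B₁ B₂)
            (circL B₁ B₂ ∘ₗ (TensorProduct.mk F H H).flip c)) a := by rw [main]
    _ = LinearMap.mul' F H ((TensorProduct.map (circL B₁ B₂ ∘ₗ (TensorProduct.mk F H H).flip b)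
          (RBAux.conv ((antipode (R := F)) ∘ₗ cocycleL B₁ B₂)
            (circL B₁ B₂ ∘ₗ (TensorProduct.mk F H H).flip c))) (Coalgebra.comul a)) := rfl
    _ = _ := by rw [hmap]; rfl
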